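/- arXiv:1101.3453 — 5 statements merged into one kernel-verified Lean document; each statement's English description precedes it below -/
import Mathlib

section
/- For partitions X and Y of a finite set, X is refined by Y (every block of Y is contained in a block of X) if and only if for every probability distribution μ on the set and every natural number n, the expected probability of guessing the secret in n tries given X is at most that given Y, where the expected probability of guessing in n tries given a partition is the sum over blocks of the n largest element-probabilities in that block. -/
open Finset

variable {σ : Type*} [Fintype σ] [DecidableEq σ]

/-- A probability distribution on a finite type. -/
def IsDist (μ : σ → ℝ) : Prop := (∀ x, 0 ≤ μ x) ∧ ∑ x, μ x = 1

/-- `Refines X Y` : `X ⊑ Y`, i.e. every block of `Y` is contained in some block of `X`. -/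
def Refines (X Y : Finpartition (univ : Finset σ)) : Prop :=
  ∀ B ∈ Y.parts, ∃ C ∈ X.parts, B ⊆ C

/-- The common refinement (the paper's join `X ⊔ Y`). -/
def pJoin (X Y : Finpartition (univ : Finset σ)) : Finpartition (univ : Finset σ) := X ⊓ Y

/-- The setoid associated to a finpartition. -/
def toSetoid (X : Finpartition (univ : Finset σ)) : Setoid σ where
  r x y := ∃ B ∈ X.parts, x ∈ B ∧ y ∈ B
  iseqv := by
    constructor
    · intro x
      obtain ⟨B, hB, hx⟩ := X.exists_mem (mem_univ x)
      exact ⟨B, hB, hx, hx⟩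
    · rintro x y ⟨B, hB, hx, hy⟩; exact ⟨B, hB, hy, hx⟩
    · rintro x y z ⟨B, hB, hx, hy⟩ ⟨C, hC, hy', hz⟩
      exact ⟨B, hB, hx, X.eq_of_mem_parts hC hB hy' hy ▸ hz⟩

/-- The coarsest common coarsening (the paper's meet `X ⊓ Y`). -/
noncomputable def pMeet (X Y : Finpartition (univ : Finset σ)) : Finpartition (univ : Finset σ) :=
  letI : DecidableRel (toSetoid X ⊔ toSetoid Y).r := Classical.decRel _
  Finpartition.ofSetoid (toSetoid X ⊔ toSetoid Y)

/-- Sum of the `n` largest `μ`-probabilities among the elements of `B`. -/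
def gGuess (μ : σ → ℝ) (n : ℕ) (B : Finset σ) : ℝ :=
  (B.powerset.filter fun S => S.card ≤ n).sup' ⟨∅, by simp⟩ fun S => ∑ x ∈ S, μ x

/-- Expected probability of guessing in `n` tries given partition `X`. -/
def GGuess (μ : σ → ℝ) (n : ℕ) (X : Finpartition (univ : Finset σ)) : ℝ :=
  ∑ B ∈ X.parts, gGuess μ n B

/-- Expected number of guesses for a block `B` (elements asked in order of
decreasing probability, i.e. the ordering minimising the expected rank). -/
noncomputable def NGset (μ : σ → ℝ) (B : Finset σ) : ℝ :=
  ⨅ e : B ≃ Fin B.card, ∑ x ∈ B.attach, ((e x : ℕ) + 1 : ℝ) * μ x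

/-- Expected number of guesses given a partition. -/
noncomputable def NGpart (μ : σ → ℝ) (X : Finpartition (univ : Finset σ)) : ℝ :=
  ∑ B ∈ X.parts, NGset μ B

/-- Shannon entropy (base 2) of the block distribution induced by `μ` on `X`. -/
noncomputable def entropy (μ : σ → ℝ) (X : Finpartition (univ : Finset σ)) : ℝ :=
  - ∑ B ∈ X.parts, (∑ x ∈ B, μ x) * Real.logb 2 (∑ x ∈ B, μ x)

/-- Conditional entropy `H(X|Y) = H(X ⊔ Y) - H(Y)`. -/
noncomputable def condEntropy (μ : σ → ℝ) (X Y : Finpartition (univ : Finset σ)) : ℝ :=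
  entropy μ (pJoin X Y) - entropy μ Y

/-- Mutual information `I(X;Y) = H(X) + H(Y) - H(X ⊔ Y)`. -/
noncomputable def mutualInfo (μ : σ → ℝ) (X Y : Finpartition (univ : Finset σ)) : ℝ :=
  entropy μ X + entropy μ Y - entropy μ (pJoin X Y)

/-- Maximum probability in a block. -/
noncomputable def fmax (μ : σ → ℝ) (B : Finset σ) : ℝ := ((B.image μ).max).unbotD 0

/-- Min-entropy leakage of a partition. -/
noncomputable def MEleak (μ : σ → ℝ) (X : Finpartition (univ : Finset σ)) : ℝ :=
  Real.logb 2 (∑ B ∈ X.parts, fmax μ B) - Real.logb 2 (fmax μ (univ : Finset σ))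

/-- Kernel partition of a function on a finite type. -/
def kerP {O : Type*} [DecidableEq O] (f : σ → O) : Finpartition (univ : Finset σ) :=
  letI : DecidableRel (Setoid.ker f).r := fun a b => decEq (f a) (f b)
  Finpartition.ofSetoid (Setoid.ker f)


-- Auxiliary lemmas

lemma le_gGuess (μ : σ → ℝ) (n : ℕ) {B S : Finset σ} (hS : S ⊆ B) (hc : S.card ≤ n) :
    ∑ x ∈ S, μ x ≤ gGuess μ n B :=
  Finset.le_sup' (fun S => ∑ x ∈ S, μ x)
    (by simp [Finset.mem_filter, Finset.mem_powerset, hS, hc])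

lemma gGuess_nonneg (μ : σ → ℝ) (n : ℕ) (B : Finset σ) : 0 ≤ gGuess μ n B := by
  simpa using le_gGuess μ n (Finset.empty_subset B) (by simp)

lemma gGuess_le (μ : σ → ℝ) (n : ℕ) (B : Finset σ) {a : ℝ}
    (h : ∀ S ⊆ B, S.card ≤ n → ∑ x ∈ S, μ x ≤ a) : gGuess μ n B ≤ a := by
  apply Finset.sup'_le
  intro S hS
  simp only [Finset.mem_filter, Finset.mem_powerset] at hS
  exact h S hS.1 hS.2

lemma exists_gGuess_eq (μ : σ → ℝ) (n : ℕ) (B : Finset σ) :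
    ∃ S ⊆ B, S.card ≤ n ∧ gGuess μ n B = ∑ x ∈ S, μ x := by
  obtain ⟨S, hS, hEq⟩ := Finset.exists_mem_eq_sup' (α := ℝ)
    (⟨∅, by simp⟩ : (B.powerset.filter fun S => S.card ≤ n).Nonempty) (fun S => ∑ x ∈ S, μ x)
  simp only [Finset.mem_filter, Finset.mem_powerset] at hS
  exact ⟨S, hS.1, hS.2, hEq⟩

theorem refines_iff_forall_guess_le (X Y : Finpartition (univ : Finset σ)) :
    Refines X Y ↔ ∀ μ : σ → ℝ, IsDist μ → ∀ n : ℕ, GGuess μ n X ≤ GGuess μ n Y := by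
  constructor
  · intro hR μ hμ n
    -- key: for each block C of X, gGuess C ≤ sum of gGuess over Y-blocks inside C
    have key : ∀ C ∈ X.parts,
        gGuess μ n C ≤ ∑ B ∈ Y.parts.filter (· ⊆ C), gGuess μ n B := by
      intro C hC
      obtain ⟨S, hSC, hScard, hSeq⟩ := exists_gGuess_eq μ n C
      rw [hSeq]
      have step : ∀ x ∈ S, μ x = ∑ B ∈ Y.parts.filter (· ⊆ C), if x ∈ B then μ x else 0 := by
        intro x hx
        obtain ⟨B, hB, hxB⟩ := Y.exists_mem (mem_univ x)
        obtain ⟨C', hC', hBC'⟩ := hR B hB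
        have hCC' : C' = C := X.eq_of_mem_parts hC' hC (hBC' hxB) (hSC hx)
        rw [Finset.sum_eq_single B]
        · simp [hxB]
        · intro B' hB' hne
          simp only [Finset.mem_filter] at hB'
          have : x ∉ B' := fun hxB' => hne (Y.eq_of_mem_parts hB'.1 hB hxB' hxB)
          simp [this]
        · intro hB''
          exact absurd (Finset.mem_filter.2 ⟨hB, hCC' ▸ hBC'⟩) hB''
      calc ∑ x ∈ S, μ x
          = ∑ x ∈ S, ∑ B ∈ Y.parts.filter (· ⊆ C), if x ∈ B then μ x else 0 :=
            Finset.sum_congr rfl step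
        _ = ∑ B ∈ Y.parts.filter (· ⊆ C), ∑ x ∈ S, if x ∈ B then μ x else 0 :=
            Finset.sum_comm
        _ ≤ ∑ B ∈ Y.parts.filter (· ⊆ C), gGuess μ n B := by
            apply Finset.sum_le_sum
            intro B hB
            rw [Finset.sum_ite_mem]
            exact le_gGuess μ n (Finset.inter_subset_right)
              (le_trans (Finset.card_le_card Finset.inter_subset_left) hScard)
    calc GGuess μ n X ≤ ∑ C ∈ X.parts, ∑ B ∈ Y.parts.filter (· ⊆ C), gGuess μ n B :=
          Finset.sum_le_sum key
      _ = ∑ C ∈ X.parts, ∑ B ∈ Y.parts, if B ⊆ C then gGuess μ n B else 0 := by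
          simp [Finset.sum_filter]
      _ = ∑ B ∈ Y.parts, ∑ C ∈ X.parts, if B ⊆ C then gGuess μ n B else 0 :=
          Finset.sum_comm
      _ = GGuess μ n Y := by
          apply Finset.sum_congr rfl
          intro B hB
          obtain ⟨C, hC, hBC⟩ := hR B hB
          obtain ⟨x, hx⟩ := Y.nonempty_of_mem_parts hB
          rw [Finset.sum_eq_single C]
          · simp [hBC]
          · intro C' hC' hne
            have : ¬ B ⊆ C' := fun h =>
              hne (X.eq_of_mem_parts hC' hC (h hx) (hBC hx))
            simp [this]
          · intro h; exact absurd hC h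
  · intro h
    by_contra hR
    simp only [Refines, not_forall] at hR
    obtain ⟨B, hB, hnot⟩ := hR
    push_neg at hnot
    obtain ⟨x, hxB⟩ := Y.nonempty_of_mem_parts hB
    obtain ⟨C, hC, hxC⟩ := X.exists_mem (mem_univ x)
    have : ¬ B ⊆ C := hnot C hC
    obtain ⟨y, hyB, hyC⟩ := Finset.not_subset.1 this
    obtain ⟨C', hC', hyC'⟩ := X.exists_mem (mem_univ y)
    have hxy : x ≠ y := fun h => hyC (h ▸ hxC)
    have hCC' : C ≠ C' := fun h => hyC (h ▸ hyC')
    set μ : σ → ℝ := fun z => (if z = x then (1:ℝ)/2 else 0) + (if z = y then (1:ℝ)/2 else 0)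
      with hμdef
    have hμx : μ x = 1/2 := by simp [hμdef, hxy]
    have hμy : μ y = 1/2 := by simp [hμdef, hxy.symm]
    have hμ0 : ∀ z, z ≠ x → z ≠ y → μ z = 0 := by
      intro z h1 h2; simp [hμdef, h1, h2]
    have hμnonneg : ∀ z, 0 ≤ μ z := by
      intro z; simp only [hμdef]; positivity
    have hμle : ∀ z, μ z ≤ 1/2 := by
      intro z
      rcases eq_or_ne z x with rfl | h1
      · rw [hμx]
      rcases eq_or_ne z y with rfl | h2
      · rw [hμy]
      · rw [hμ0 z h1 h2]; norm_num
    have hdist : IsDist μ := by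
      refine ⟨hμnonneg, ?_⟩
      simp only [hμdef, Finset.sum_add_distrib, Finset.sum_ite_eq' Finset.univ,
        mem_univ, if_true]
      norm_num
    have hle := h μ hdist 1
    -- GGuess μ 1 X ≥ 1
    have hXge : (1:ℝ) ≤ GGuess μ 1 X := by
      have h1 : (1/2 : ℝ) ≤ gGuess μ 1 C := by
        have := le_gGuess μ 1 (Finset.singleton_subset_iff.2 hxC) (by simp)
        simpa [hμx] using this
      have h2 : (1/2 : ℝ) ≤ gGuess μ 1 C' := by
        have := le_gGuess μ 1 (Finset.singleton_subset_iff.2 hyC') (by simp)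
        simpa [hμy] using this
      have hsub : {C, C'} ⊆ X.parts := by
        intro z hz
        rcases Finset.mem_insert.1 hz with rfl | hz
        · exact hC
        · exact Finset.mem_singleton.1 hz ▸ hC'
      calc (1:ℝ) = 1/2 + 1/2 := by norm_num
        _ ≤ gGuess μ 1 C + gGuess μ 1 C' := add_le_add h1 h2
        _ = ∑ D ∈ ({C, C'} : Finset (Finset σ)), gGuess μ 1 D := by
            rw [Finset.sum_pair hCC']
        _ ≤ GGuess μ 1 X :=
            Finset.sum_le_sum_of_subset_of_nonneg hsub
              (fun D _ _ => gGuess_nonneg μ 1 D)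
    -- GGuess μ 1 Y ≤ 1/2
    have hYle : GGuess μ 1 Y ≤ 1/2 := by
      have hbound : ∀ D ∈ Y.parts, gGuess μ 1 D ≤ if D = B then 1/2 else 0 := by
        intro D hD
        split_ifs with hDB
        · apply gGuess_le
          intro S hS hScard
          interval_cases hc : S.card
          · rw [Finset.card_eq_zero.1 hc]; norm_num
          · obtain ⟨z, rfl⟩ := Finset.card_eq_one.1 hc
            simpa using hμle z
        · apply gGuess_le
          intro S hS _
          have : ∀ z ∈ S, μ z = 0 := by
            intro z hz
            refine hμ0 z (fun h => ?_) (fun h => ?_)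
            · exact hDB (Y.eq_of_mem_parts hD hB (h ▸ hS hz) hxB)
            · exact hDB (Y.eq_of_mem_parts hD hB (h ▸ hS hz) hyB)
          rw [Finset.sum_eq_zero this]
      calc GGuess μ 1 Y ≤ ∑ D ∈ Y.parts, if D = B then (1/2 : ℝ) else 0 :=
            Finset.sum_le_sum hbound
        _ = 1/2 := by rw [Finset.sum_ite_eq' Y.parts B, if_pos hB]
    linarith
end

section
/- For partitions X and Y of a finite set, X is refined by Y if and only if for every probability distribution μ, the expected probability of guessing the secret in one try given X is at most that given Y. -/
open Finset

variable {σ : Type*} [Fintype σ] [DecidableEq σ]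

lemma gGuess_one_nonneg (μ : σ → ℝ) (B : Finset σ) : 0 ≤ gGuess μ 1 B := by
  have h : (∅ : Finset σ) ∈ B.powerset.filter (fun S => S.card ≤ 1) := by simp
  unfold gGuess
  simpa only [Finset.sum_empty] using Finset.le_sup' (fun S => ∑ x ∈ S, μ x) h

lemma le_gGuess_one (μ : σ → ℝ) {B : Finset σ} {x : σ} (hx : x ∈ B) :
    μ x ≤ gGuess μ 1 B := by
  have h : ({x} : Finset σ) ∈ B.powerset.filter (fun S => S.card ≤ 1) := by
    simp [Finset.singleton_subset_iff, hx]
  unfold gGuess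
  simpa only [Finset.sum_singleton] using Finset.le_sup' (fun S => ∑ x ∈ S, μ x) h

lemma gGuess_one_le (μ : σ → ℝ) {B : Finset σ} {r : ℝ} (hr : 0 ≤ r)
    (h : ∀ x ∈ B, μ x ≤ r) : gGuess μ 1 B ≤ r := by
  apply Finset.sup'_le
  intro S hS
  simp only [Finset.mem_filter, Finset.mem_powerset] at hS
  obtain ⟨hSB, hS1⟩ := hS
  rcases S.eq_empty_or_nonempty with rfl | ⟨x, hx⟩
  · simpa using hr
  · have hSx : S = {x} := Finset.eq_singleton_iff_unique_mem.mpr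
      ⟨hx, fun b hb => Finset.card_le_one.mp hS1 b hb x hx⟩
    subst hSx
    simpa using h x (hSB (Finset.mem_singleton_self x))

theorem refines_iff_forall_one_guess_le (X Y : Finpartition (univ : Finset σ)) :
    Refines X Y ↔ ∀ μ : σ → ℝ, IsDist μ → GGuess μ 1 X ≤ GGuess μ 1 Y := by
  constructor
  · intro href μ hμ
    obtain ⟨hpos, -⟩ := hμ
    have key : ∀ C ∈ X.parts,
        gGuess μ 1 C ≤ ∑ B ∈ Y.parts.filter (· ⊆ C), gGuess μ 1 B := by
      intro C hC
      apply gGuess_one_le μ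
      · exact Finset.sum_nonneg fun B _ => gGuess_one_nonneg μ B
      · intro x hxC
        obtain ⟨B, hB, hxB⟩ := Y.exists_mem (mem_univ x)
        obtain ⟨C', hC', hBC'⟩ := href B hB
        have hCC' : C' = C := X.eq_of_mem_parts hC' hC (hBC' hxB) hxC
        have hBf : B ∈ Y.parts.filter (· ⊆ C) := by
          simp only [Finset.mem_filter]
          exact ⟨hB, hCC' ▸ hBC'⟩
        calc μ x ≤ gGuess μ 1 B := le_gGuess_one μ hxB
          _ ≤ ∑ B ∈ Y.parts.filter (· ⊆ C), gGuess μ 1 B :=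
            Finset.single_le_sum (fun B _ => gGuess_one_nonneg μ B) hBf
    calc GGuess μ 1 X ≤ ∑ C ∈ X.parts, ∑ B ∈ Y.parts.filter (· ⊆ C), gGuess μ 1 B :=
          Finset.sum_le_sum key
      _ = ∑ C ∈ X.parts, ∑ B ∈ Y.parts, if B ⊆ C then gGuess μ 1 B else 0 := by
          simp [Finset.sum_filter]
      _ = ∑ B ∈ Y.parts, ∑ C ∈ X.parts, if B ⊆ C then gGuess μ 1 B else 0 :=
          Finset.sum_comm
      _ = GGuess μ 1 Y := by
          apply Finset.sum_congr rfl
          intro B hB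
          obtain ⟨C₀, hC₀, hBC₀⟩ := href B hB
          obtain ⟨y, hy⟩ := Y.nonempty_of_mem_parts hB
          rw [← Finset.sum_filter]
          have : X.parts.filter (fun C => B ⊆ C) = {C₀} := by
            ext C
            simp only [Finset.mem_filter, Finset.mem_singleton]
            constructor
            · rintro ⟨hC, hBC⟩
              exact X.eq_of_mem_parts hC hC₀ (hBC hy) (hBC₀ hy)
            · rintro rfl; exact ⟨hC₀, hBC₀⟩
          rw [this, Finset.sum_singleton]
  · intro h B hB
    by_contra hnot
    push_neg at hnot
    obtain ⟨x, hxB⟩ := Y.nonempty_of_mem_parts hB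
    obtain ⟨C, hC, hxC⟩ := X.exists_mem (mem_univ x)
    obtain ⟨y, hyB, hyC⟩ := Finset.not_subset.mp (hnot C hC)
    obtain ⟨C', hC', hyC'⟩ := X.exists_mem (mem_univ y)
    have hCC' : C ≠ C' := fun h => hyC (h ▸ hyC')
    set μ : σ → ℝ := fun z => if z = x ∨ z = y then (1:ℝ)/2 else 0 with hμdef
    have hxy : x ≠ y := fun h => hyC (h ▸ hxC)
    have hpos : ∀ z, 0 ≤ μ z := by
      intro z; simp only [hμdef]; split <;> norm_num
    have hμx : μ x = 1/2 := by simp [hμdef]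
    have hμy : μ y = 1/2 := by simp [hμdef]
    have hμle : ∀ z, μ z ≤ 1/2 := by
      intro z; simp only [hμdef]; split <;> norm_num
    have hdist : IsDist μ :=
      ⟨hpos, by
        have : ∀ z, μ z = if z ∈ ({x, y} : Finset σ) then (1:ℝ)/2 else 0 := by
          intro z; simp [hμdef, Finset.mem_insert]
        rw [Finset.sum_congr rfl fun z _ => this z, Finset.sum_ite_mem,
          Finset.univ_inter, Finset.sum_const, Finset.card_insert_of_notMem
          (by simp [hxy]), Finset.card_singleton]
        norm_num⟩
    have hXge : (1:ℝ) ≤ GGuess μ 1 X := by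
      have hsub : ({C, C'} : Finset (Finset σ)) ⊆ X.parts := by
        intro D hD
        rcases Finset.mem_insert.mp hD with rfl | hD
        · exact hC
        · exact Finset.mem_singleton.mp hD ▸ hC'
      have h1 : ∑ D ∈ ({C, C'} : Finset (Finset σ)), gGuess μ 1 D ≤ GGuess μ 1 X :=
        Finset.sum_le_sum_of_subset_of_nonneg hsub
          fun D _ _ => gGuess_one_nonneg μ D
      rw [Finset.sum_pair hCC'] at h1
      have h2 : (1:ℝ)/2 ≤ gGuess μ 1 C := hμx ▸ le_gGuess_one μ hxC
      have h3 : (1:ℝ)/2 ≤ gGuess μ 1 C' := hμy ▸ le_gGuess_one μ hyC'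
      unfold GGuess at *
      linarith
    have hYle : GGuess μ 1 Y ≤ 1/2 := by
      have h1 : ∀ D ∈ Y.parts,
          gGuess μ 1 D ≤ if D = B then (1:ℝ)/2 else 0 := by
        intro D hD
        split
        · exact gGuess_one_le μ (by norm_num) fun z _ => hμle z
        · next hne =>
          apply gGuess_one_le μ le_rfl
          intro z hzD
          have hzB : z = x ∨ z = y → False := by
            rintro (rfl | rfl)
            · exact hne (Y.eq_of_mem_parts hD hB hzD hxB)
            · exact hne (Y.eq_of_mem_parts hD hB hzD hyB)
          simp only [hμdef]
          rw [if_neg hzB]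
      calc GGuess μ 1 Y ≤ ∑ D ∈ Y.parts, if D = B then (1:ℝ)/2 else 0 :=
            Finset.sum_le_sum h1
        _ = 1/2 := by rw [Finset.sum_ite_eq' Y.parts B fun _ => (1:ℝ)/2, if_pos hB]
    have := h μ hdist
    linarith
end

section
/- For partitions X and Y of a finite set, X is refined by Y if and only if for every probability distribution μ, the expected number of guesses needed to guess the secret given Y is at most that given X. -/
open Finset

variable {σ : Type*} [Fintype σ] [DecidableEq σ]

set_option linter.unusedSectionVars false

instance NE (B : Finset σ) : Nonempty (↥B ≃ Fin B.card) :=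
  ⟨Fintype.equivFinOfCardEq (Fintype.card_coe B)⟩

lemma NGset_le (μ : σ → ℝ) (B : Finset σ) (e : ↥B ≃ Fin B.card) :
    NGset μ B ≤ ∑ x ∈ B.attach, ((e x : ℕ) + 1 : ℝ) * μ x :=
  ciInf_le (Finite.bddBelow_range _) e

lemma le_NGset (μ : σ → ℝ) (B : Finset σ) {c : ℝ}
    (h : ∀ e : ↥B ≃ Fin B.card, c ≤ ∑ x ∈ B.attach, ((e x : ℕ) + 1 : ℝ) * μ x) :
    c ≤ NGset μ B := le_ciInf h

lemma NGset_nonneg (μ : σ → ℝ) (hpos : ∀ x, 0 ≤ μ x) (B : Finset σ) : 0 ≤ NGset μ B := by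
  refine le_NGset μ B fun e => Finset.sum_nonneg fun x _ => ?_
  have : (0:ℝ) ≤ (e x : ℕ) + 1 := by positivity
  exact mul_nonneg this (hpos x)

lemma strictMono_fin_le {n : ℕ} {g : Fin n → ℕ} (hg : StrictMono g) (i : Fin n) :
    (i : ℕ) ≤ g i := by
  induction' h : (i : ℕ) with k ih generalizing i
  · omega
  · have hk : k < n := by omega
    have hji : (⟨k, hk⟩ : Fin n) < i := by simp only [Fin.lt_def]; omega
    have h1 := ih ⟨k, hk⟩ rfl
    have h2 := hg hji
    omega

/-- Key: injective ℕ-labelings bound NGset from above. -/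
lemma NGset_le_of_inj (μ : σ → ℝ) (hpos : ∀ x, 0 ≤ μ x) (B : Finset σ)
    (f : ↥B → ℕ) (hf : Function.Injective f) :
    NGset μ B ≤ ∑ x ∈ B.attach, ((f x : ℝ) + 1) * μ x := by
  classical
  set n := B.card with hn
  set s : Finset ℕ := B.attach.image f with hs
  have hcard : s.card = n := by
    rw [hs, Finset.card_image_of_injective _ hf, Finset.card_attach]
  have hmem : ∀ x : ↥B, f x ∈ s := fun x => Finset.mem_image_of_mem f (Finset.mem_attach _ x)
  let iso := s.orderIsoOfFin hcard
  let g : ↥B → Fin n := fun x => iso.symm ⟨f x, hmem x⟩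
  have hginj : Function.Injective g := by
    intro x y hxy
    have := iso.symm.injective hxy
    exact hf (Subtype.ext_iff.mp this)
  have hcards : Fintype.card ↥B = Fintype.card (Fin n) := by
    simp [Fintype.card_coe, hn]
  have hgbij : Function.Bijective g :=
    (Fintype.bijective_iff_injective_and_card g).mpr ⟨hginj, hcards⟩
  let e : ↥B ≃ Fin n := Equiv.ofBijective g hgbij
  have hle : ∀ x : ↥B, (e x : ℕ) ≤ f x := by
    intro x
    have hm : StrictMono (fun i : Fin n => ((iso i : ℕ))) := fun i j hij => by
      exact_mod_cast iso.strictMono hij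
    have h1 : ((iso (g x) : ℕ)) = f x := by simp [g, iso]
    have := strictMono_fin_le hm (g x)
    simpa [e, Equiv.ofBijective, h1] using this
  calc NGset μ B ≤ ∑ x ∈ B.attach, ((e x : ℕ) + 1 : ℝ) * μ x := NGset_le μ B e
    _ ≤ ∑ x ∈ B.attach, ((f x : ℝ) + 1) * μ x := by
        refine Finset.sum_le_sum fun x _ => ?_
        have := hle x
        have h2 : ((e x : ℕ) : ℝ) + 1 ≤ (f x : ℝ) + 1 := by exact_mod_cast Nat.succ_le_succ this
        exact mul_le_mul_of_nonneg_right h2 (hpos x)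

set_option linter.unusedSectionVars false

/-- Splitting a block into disjoint pieces decreases expected guesses. -/
lemma NGset_split (μ : σ → ℝ) (hpos : ∀ x, 0 ≤ μ x) (C : Finset σ)
    (P : Finset (Finset σ)) (hsub : ∀ B ∈ P, B ⊆ C)
    (hdisj : (P : Set (Finset σ)).PairwiseDisjoint id) :
    ∑ B ∈ P, NGset μ B ≤ NGset μ C := by
  classical
  refine le_NGset μ C fun e => ?_
  set F : σ → ℝ := fun x => if h : x ∈ C then ((e ⟨x, h⟩ : ℕ) + 1 : ℝ) * μ x else 0 with hF
  have hFnn : ∀ x, 0 ≤ F x := by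
    intro x
    by_cases h : x ∈ C
    · simp only [hF, dif_pos h]
      exact mul_nonneg (by positivity) (hpos x)
    · simp [hF, h]
  have hrhs : ∑ x ∈ C.attach, ((e x : ℕ) + 1 : ℝ) * μ x = ∑ x ∈ C, F x := by
    rw [← Finset.sum_attach C F]
    refine Finset.sum_congr rfl fun x _ => ?_
    simp [hF, x.2]
  rw [hrhs]
  have step1 : ∀ B ∈ P, NGset μ B ≤ ∑ x ∈ B, F x := by
    intro B hB
    have hBC := hsub B hB
    have := NGset_le_of_inj μ hpos B (fun x => (e ⟨↑x, hBC x.2⟩ : ℕ))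
      (by intro x y hxy
          have h2 := e.injective (Fin.ext hxy)
          exact Subtype.ext (Subtype.mk_eq_mk.mp h2))
    refine this.trans (le_of_eq ?_)
    rw [← Finset.sum_attach B F]
    refine Finset.sum_congr rfl fun x _ => ?_
    simp [hF, hBC x.2]
  calc ∑ B ∈ P, NGset μ B ≤ ∑ B ∈ P, ∑ x ∈ B, F x := Finset.sum_le_sum step1
    _ = ∑ x ∈ P.biUnion id, F x := (Finset.sum_biUnion hdisj).symm
    _ ≤ ∑ x ∈ C, F x := by
        refine Finset.sum_le_sum_of_subset_of_nonneg ?_ fun x _ _ => hFnn x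
        intro x hx
        obtain ⟨B, hB, hxB⟩ := Finset.mem_biUnion.mp hx
        exact hsub B hB hxB

/-- If at most one element of `B` has nonzero probability then NGset ≤ total mass. -/
lemma NGset_le_sum (μ : σ → ℝ) (hpos : ∀ x, 0 ≤ μ x) (B : Finset σ)
    (huniq : ∀ x ∈ B, ∀ y ∈ B, μ x ≠ 0 → μ y ≠ 0 → x = y) :
    NGset μ B ≤ ∑ x ∈ B, μ x := by
  classical
  by_cases hz : ∀ x ∈ B, μ x = 0
  · have h0 : ∑ x ∈ B, μ x = 0 := Finset.sum_eq_zero hz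
    rw [h0]
    obtain ⟨e⟩ := NE B
    refine (NGset_le μ B e).trans (le_of_eq ?_)
    exact Finset.sum_eq_zero fun x _ => by rw [hz ↑x x.2, mul_zero]
  · push_neg at hz
    obtain ⟨a, haB, haμ⟩ := hz
    obtain ⟨e0⟩ := NE B
    set f : ↥B → ℕ := fun x => if (x : σ) = a then 0 else (e0 x : ℕ) + 1 with hf
    have hfinj : Function.Injective f := by
      intro x y hxy
      simp only [hf] at hxy
      by_cases hx : (x : σ) = a <;> by_cases hy : (y : σ) = a
      · exact Subtype.ext (hx.trans hy.symm)
      · simp [hx, hy] at hxy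
      · simp [hx, hy] at hxy
      · simp only [hx, hy, if_neg, not_false_iff] at hxy
        exact e0.injective (Fin.ext (by omega))
    refine (NGset_le_of_inj μ hpos B f hfinj).trans (le_of_eq ?_)
    rw [← Finset.sum_attach B μ]
    refine Finset.sum_congr rfl fun x _ => ?_
    by_cases hx : (x : σ) = a
    · simp [hf, hx]
    · have : μ ↑x = 0 := by
        by_contra hne
        exact hx (huniq ↑x x.2 a haB hne haμ)
      simp [this]

lemma NGset_ge_of_pair (μ : σ → ℝ) (hpos : ∀ x, 0 ≤ μ x) (B : Finset σ)
    {a b : σ} (haB : a ∈ B) (hbB : b ∈ B) (hab : a ≠ b)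
    (hμa : μ a = 1/2) (hμb : μ b = 1/2) :
    (3/2 : ℝ) ≤ NGset μ B := by
  refine le_NGset μ B fun e => ?_
  set xa : ↥B := ⟨a, haB⟩ with hxa
  set xb : ↥B := ⟨b, hbB⟩ with hxb
  have hne : xa ≠ xb := fun h => hab (Subtype.mk_eq_mk.mp h)
  have h1 : ∑ x ∈ ({xa, xb} : Finset ↥B), ((e x : ℕ) + 1 : ℝ) * μ x
      ≤ ∑ x ∈ B.attach, ((e x : ℕ) + 1 : ℝ) * μ x :=
    Finset.sum_le_sum_of_subset_of_nonneg (fun x _ => Finset.mem_attach _ _)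
      (fun x _ _ => mul_nonneg (by positivity) (hpos x))
  rw [Finset.sum_pair hne] at h1
  have hca : μ (↑xa) = 1/2 := by rw [hxa]; exact hμa
  have hcb : μ (↑xb) = 1/2 := by rw [hxb]; exact hμb
  rw [hca, hcb] at h1
  have hee : (e xa : ℕ) ≠ (e xb : ℕ) := fun h => hne (e.injective (Fin.ext h))
  have h2 : (1:ℝ) ≤ ((e xa : ℕ) : ℝ) + ((e xb : ℕ) : ℝ) := by exact_mod_cast by omega
  linarith

theorem refines_iff_forall_expected_guesses_ge (X Y : Finpartition (univ : Finset σ)) :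
    Refines X Y ↔ ∀ μ : σ → ℝ, IsDist μ → NGpart μ Y ≤ NGpart μ X := by
  classical
  constructor
  · intro hR μ hμ
    obtain ⟨hpos, -⟩ := hμ
    choose g hg1 hg2 using hR
    set g' : Finset σ → Finset σ := fun B => if h : B ∈ Y.parts then g B h else ∅ with hg'
    have hmaps : ∀ B ∈ Y.parts, g' B ∈ X.parts := fun B hB => by
      simp only [hg', dif_pos hB]; exact hg1 B hB
    unfold NGpart
    rw [← Finset.sum_fiberwise_of_maps_to hmaps (NGset μ)]
    refine Finset.sum_le_sum fun C hC => ?_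
    refine NGset_split μ hpos C _ ?_ ?_
    · intro B hB
      rw [Finset.mem_filter] at hB
      obtain ⟨hBY, hBC⟩ := hB
      have h2 := hg2 B hBY
      simp only [hg', dif_pos hBY] at hBC
      rwa [← hBC]
    · refine Y.disjoint.subset ?_
      intro B hB
      exact (Finset.mem_filter.mp hB).1
  · intro h B hB
    by_contra hn
    push_neg at hn
    obtain ⟨a, haB⟩ := Y.nonempty_of_mem_parts hB
    obtain ⟨C, hC, haC⟩ := X.exists_mem (mem_univ a)
    obtain ⟨b, hbB, hbC⟩ := Finset.not_subset.mp (hn C hC)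
    have hab : a ≠ b := fun h' => hbC (h' ▸ haC)
    set μ : σ → ℝ := fun x => if x = a ∨ x = b then 1/2 else 0 with hμdef
    have hpos : ∀ x, 0 ≤ μ x := fun x => by
      by_cases h' : x = a ∨ x = b <;> simp [hμdef, h']
    have hμa : μ a = 1/2 := by simp [hμdef]
    have hμb : μ b = 1/2 := by simp [hμdef]
    have hdist : IsDist μ := by
      refine ⟨hpos, ?_⟩
      have hsum : ∑ x, μ x = ∑ x ∈ ({a, b} : Finset σ), μ x := by
        refine (Finset.sum_subset (Finset.subset_univ _) ?_).symm
        intro x _ hx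
        simp only [Finset.mem_insert, Finset.mem_singleton] at hx
        push_neg at hx
        simp [hμdef, hx.1, hx.2]
      rw [hsum, Finset.sum_pair hab, hμa, hμb]
      norm_num
    have hYge : (3/2 : ℝ) ≤ NGpart μ Y := by
      unfold NGpart
      calc (3/2:ℝ) ≤ NGset μ B := NGset_ge_of_pair μ hpos B haB hbB hab hμa hμb
        _ ≤ ∑ B' ∈ Y.parts, NGset μ B' :=
            Finset.single_le_sum (fun B' _ => NGset_nonneg μ hpos B') hB
    have hXle : NGpart μ X ≤ 1 := by
      unfold NGpart
      have h1 : ∀ C' ∈ X.parts, NGset μ C' ≤ ∑ x ∈ C', μ x := by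
        intro C' hC'
        refine NGset_le_sum μ hpos C' ?_
        intro x hx y hy hx0 hy0
        have hx' : x = a ∨ x = b := by
          by_contra hc; push_neg at hc; simp [hμdef, hc.1, hc.2] at hx0
        have hy' : y = a ∨ y = b := by
          by_contra hc; push_neg at hc; simp [hμdef, hc.1, hc.2] at hy0
        rcases hx' with rfl | rfl <;> rcases hy' with rfl | rfl
        · rfl
        · exact absurd ((X.eq_of_mem_parts hC' hC hx haC) ▸ hy) hbC
        · exact absurd ((X.eq_of_mem_parts hC' hC hy haC) ▸ hx) hbC
        · rfl
      calc ∑ C' ∈ X.parts, NGset μ C' ≤ ∑ C' ∈ X.parts, ∑ x ∈ C', μ x :=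
            Finset.sum_le_sum h1
        _ = ∑ x ∈ X.parts.biUnion id, μ x := (Finset.sum_biUnion X.disjoint).symm
        _ = ∑ x, μ x := by rw [X.biUnion_parts]
        _ = 1 := hdist.2
    have hcon := h μ hdist
    linarith
end

section
/- For partitions X and Y of a finite set, X is refined by Y if and only if for every probability distribution μ on the set, the Shannon entropy of X (as a random variable induced by μ) is at most the Shannon entropy of Y. -/
open Finset

variable {σ : Type*} [Fintype σ] [DecidableEq σ]

theorem refines_iff_forall_entropy_le (X Y : Finpartition (univ : Finset σ)) :
    Refines X Y ↔ ∀ μ : σ → ℝ, IsDist μ → entropy μ X ≤ entropy μ Y := by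
  constructor
  · intro h μ hμ
    obtain ⟨hpos, _⟩ := hμ
    unfold entropy
    rw [neg_le_neg_iff]
    have hY : Y.parts = X.parts.biUnion (fun C => Y.parts.filter (· ⊆ C)) := by
      ext B
      simp only [mem_biUnion, mem_filter]
      constructor
      · intro hB
        obtain ⟨C, hC, hBC⟩ := h B hB
        exact ⟨C, hC, hB, hBC⟩
      · rintro ⟨C, _, hB, _⟩; exact hB
    rw [hY, Finset.sum_biUnion]; swap
    · intro C hC C' hC' hne
      simp only [Finset.disjoint_left, mem_filter]
      rintro B ⟨hB, hBC⟩ ⟨-, hBC'⟩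
      obtain ⟨x, hx⟩ := Y.nonempty_of_mem_parts hB
      exact hne (X.eq_of_mem_parts hC hC' (hBC hx) (hBC' hx))
    apply Finset.sum_le_sum
    intro C hC
    have hCeq : C = (Y.parts.filter (· ⊆ C)).biUnion id := by
      ext x
      simp only [mem_biUnion, mem_filter, id]
      constructor
      · intro hx
        obtain ⟨B, hB, hxB⟩ := Y.exists_mem (mem_univ x)
        obtain ⟨C', hC', hBC'⟩ := h B hB
        have : C = C' := X.eq_of_mem_parts hC hC' hx (hBC' hxB)
        exact ⟨B, ⟨hB, this ▸ hBC'⟩, hxB⟩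
      · rintro ⟨B, ⟨-, hBC⟩, hxB⟩; exact hBC hxB
    have hμC : ∑ x ∈ C, μ x = ∑ B ∈ Y.parts.filter (· ⊆ C), ∑ x ∈ B, μ x := by
      conv_lhs => rw [hCeq]
      exact Finset.sum_biUnion (Y.disjoint.subset fun B hB => (Finset.mem_filter.mp (Finset.mem_coe.mp hB)).1)
    rw [hμC]
    have hnn : ∀ B ∈ Y.parts.filter (· ⊆ C), 0 ≤ ∑ x ∈ B, μ x := fun B _ =>
      Finset.sum_nonneg fun x _ => hpos x
    calc ∑ B ∈ Y.parts.filter (· ⊆ C), (∑ x ∈ B, μ x) * Real.logb 2 (∑ x ∈ B, μ x)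
        ≤ ∑ B ∈ Y.parts.filter (· ⊆ C), (∑ x ∈ B, μ x) *
            Real.logb 2 (∑ B ∈ Y.parts.filter (· ⊆ C), ∑ x ∈ B, μ x) := by
          apply Finset.sum_le_sum
          intro B hB
          rcases eq_or_lt_of_le (hnn B hB) with h0 | h0
          · rw [← h0]; simp
          · apply mul_le_mul_of_nonneg_left _ (hnn B hB)
            exact Real.logb_le_logb_of_le (by norm_num) h0 (Finset.single_le_sum hnn hB)
      _ = _ := (Finset.sum_mul _ _ _).symm
  · intro h
    by_contra href
    unfold Refines at href
    push_neg at href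
    obtain ⟨B, hB, hBC⟩ := href
    obtain ⟨a, ha⟩ := Y.nonempty_of_mem_parts hB
    obtain ⟨C, hC, haC⟩ := X.exists_mem (mem_univ a)
    obtain ⟨b, hbB, hbC⟩ := Finset.not_subset.mp (hBC C hC)
    obtain ⟨C', hC', hbC'⟩ := X.exists_mem (mem_univ b)
    have hCC' : C ≠ C' := fun e => hbC (e ▸ hbC')
    have hab : a ≠ b := fun e => hbC (e ▸ haC)
    set μ : σ → ℝ := fun x => (if x = a then (1/2 : ℝ) else 0) + (if x = b then (1/2:ℝ) else 0)
      with hμdef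
    have hdist : IsDist μ := by
      constructor
      · intro x; dsimp [μ]; positivity
      · simp [μ, Finset.sum_add_distrib, Finset.sum_ite_eq']
        norm_num
    have hsum : ∀ D : Finset σ, ∑ x ∈ D, μ x =
        (if a ∈ D then (1/2:ℝ) else 0) + (if b ∈ D then (1/2:ℝ) else 0) := by
      intro D
      simp [μ, Finset.sum_add_distrib, Finset.sum_ite_eq']
    have key := h μ hdist
    have hentY : entropy μ Y = 0 := by
      unfold entropy
      rw [← Finset.sum_sdiff (Finset.singleton_subset_iff.mpr hB)]
      have h1 : ∀ D ∈ Y.parts \ {B}, (∑ x ∈ D, μ x) * Real.logb 2 (∑ x ∈ D, μ x) = 0 := by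
        intro D hD
        rw [mem_sdiff, mem_singleton] at hD
        have haD : a ∉ D := fun h' => hD.2 (Y.eq_of_mem_parts hD.1 hB h' ha)
        have hbD : b ∉ D := fun h' => hD.2 (Y.eq_of_mem_parts hD.1 hB h' hbB)
        rw [hsum, if_neg haD, if_neg hbD]
        simp
      rw [Finset.sum_eq_zero h1, Finset.sum_singleton, hsum, if_pos ha, if_pos hbB]
      norm_num
    have hentX : entropy μ X = 1 := by
      unfold entropy
      have hsub : {C, C'} ⊆ X.parts := by
        intro D hD
        rcases mem_insert.mp hD with h' | h'
        · exact h' ▸ hC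
        · exact (mem_singleton.mp h') ▸ hC'
      rw [← Finset.sum_sdiff hsub]
      have h1 : ∀ D ∈ X.parts \ {C, C'},
          (∑ x ∈ D, μ x) * Real.logb 2 (∑ x ∈ D, μ x) = 0 := by
        intro D hD
        rw [mem_sdiff] at hD
        have haD : a ∉ D := fun h' =>
          hD.2 (mem_insert.mpr (Or.inl (X.eq_of_mem_parts hD.1 hC h' haC)))
        have hbD : b ∉ D := fun h' =>
          hD.2 (mem_insert.mpr (Or.inr (mem_singleton.mpr (X.eq_of_mem_parts hD.1 hC' h' hbC'))))
        rw [hsum, if_neg haD, if_neg hbD]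
        simp
      have haC' : a ∉ C' := fun h' => hCC' (X.eq_of_mem_parts hC hC' haC h')
      rw [Finset.sum_eq_zero h1, Finset.sum_pair hCC', hsum, hsum,
        if_pos haC, if_neg hbC, if_neg haC', if_pos hbC']
      have hlog : Real.logb 2 ((1:ℝ)/2 + 0) = -1 := by
        rw [add_zero, show ((1:ℝ)/2) = 2⁻¹ by norm_num, Real.logb_inv,
          Real.logb_self_eq_one (by norm_num : (1:ℝ) < 2)]
      rw [show ((0:ℝ) + 1/2) = 1/2 + 0 by ring, hlog]
      ring
    rw [hentX, hentY] at key
    norm_num at key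
end

section
/- For partitions X and Y of a finite set, X is refined by Y if and only if for every probability distribution μ, the conditional entropy H(X | Y) equals 0 (Shannon's information order coincides with the refinement order on the lattice of information). -/
open Finset

variable {σ : Type*} [Fintype σ] [DecidableEq σ]

theorem refines_iff_forall_condEntropy_eq_zero (X Y : Finpartition (univ : Finset σ)) :
    Refines X Y ↔ ∀ μ : σ → ℝ, IsDist μ → condEntropy μ X Y = 0 := by
  constructor
  · intro hR μ _
    have hle : Y ≤ X := fun B hB => hR B hB
    have : pJoin X Y = Y := by
      unfold pJoin
      exact inf_eq_right.mpr hle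
    simp [condEntropy, this]
  · intro h
    by_contra hnot
    obtain ⟨B, hB, hBX⟩ := by
      simpa [Refines, not_forall] using hnot
    -- find x y in B lying in different parts of X
    obtain ⟨x, hxB⟩ := Y.nonempty_of_mem_parts hB
    obtain ⟨Cx, hCx, hxCx⟩ := X.exists_mem (mem_univ x)
    obtain ⟨y, hyB, hyCx⟩ : ∃ y ∈ B, y ∉ Cx := by
      by_contra hc
      push_neg at hc
      exact hBX Cx hCx hc
    have hxy : x ≠ y := fun e => hyCx (e ▸ hxCx)
    set μ : σ → ℝ := fun a => (if a = x then (1/2:ℝ) else 0) + (if a = y then (1/2:ℝ) else 0)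
      with hμ
    have hdist : IsDist μ := by
      constructor
      · intro a; dsimp [μ]; positivity
      · simp [μ, Finset.sum_add_distrib, Finset.sum_ite_eq']
        norm_num
    have hsum : ∀ P : Finset σ, ∑ a ∈ P, μ a =
        (if x ∈ P then (1/2:ℝ) else 0) + (if y ∈ P then (1/2:ℝ) else 0) := by
      intro P
      simp [μ, Finset.sum_add_distrib, Finset.sum_ite_eq']
    -- entropy of Y is 0
    have hYent : entropy μ Y = 0 := by
      unfold entropy
      rw [neg_eq_zero]
      apply Finset.sum_eq_zero
      intro C hC
      rw [hsum]
      by_cases hxC : x ∈ C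
      · have hCB : C = B := Y.eq_of_mem_parts hC hB hxC hxB
        subst hCB
        simp [hxC, hyB]
        norm_num
      · have hyC : y ∉ C := fun hyC =>
          hxC (Y.eq_of_mem_parts hB hC hyB hyC ▸ hxB)
        simp [hxC, hyC]
    -- the parts of the join containing x resp. y
    obtain ⟨Px, hPx, hxPx⟩ := (pJoin X Y).exists_mem (mem_univ x)
    obtain ⟨Py, hPy, hyPy⟩ := (pJoin X Y).exists_mem (mem_univ y)
    have hyPx : y ∉ Px := by
      intro hy
      obtain ⟨C, hC, hPxC⟩ := (inf_le_left : X ⊓ Y ≤ X) hPx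
      have : C = Cx := X.eq_of_mem_parts hC hCx (hPxC hxPx) hxCx
      exact hyCx (this ▸ hPxC hy)
    have hPxPy : Px ≠ Py := fun e => hyPx (e ▸ hyPy)
    have hxPy : x ∉ Py := fun hx =>
      hPxPy ((pJoin X Y).eq_of_mem_parts hPx hPy hxPx hx)
    have hJent : entropy μ (pJoin X Y) = 1 := by
      unfold entropy
      have hsub : {Px, Py} ⊆ (pJoin X Y).parts := by
        intro P hP
        rcases Finset.mem_insert.1 hP with rfl | hP
        · exact hPx
        · exact Finset.mem_singleton.1 hP ▸ hPy
      rw [← Finset.sum_subset hsub]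
      · rw [Finset.sum_pair hPxPy, hsum, hsum]
        have h2 : Real.logb 2 (1/2 : ℝ) = -1 := by
          rw [one_div, Real.logb_inv, Real.logb_self_eq_one] <;> norm_num
        simp [hxPx, hyPx, hxPy, hyPy, h2]
        ring
      · intro C hC hCne
        have hxC : x ∉ C := fun hx => hCne (by
          have : C = Px := (pJoin X Y).eq_of_mem_parts hC hPx hx hxPx
          simp [this])
        have hyC : y ∉ C := fun hy => hCne (by
          have : C = Py := (pJoin X Y).eq_of_mem_parts hC hPy hy hyPy
          simp [this])
        rw [hsum]
        simp [hxC, hyC]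
    have := h μ hdist
    rw [condEntropy, hYent, hJent] at this
    norm_num at this
end
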